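/- Let a < b be real numbers and let f : ℝ → ℝ. Suppose that every point t ∈ [a, b] has an open neighborhood U such that f is concave on U ∩ [a, b]. Then f is concave on [a, b]. -/

import Mathlib

/-- Chaining lemma: slope condition over `(x,w,y)` and `(w,y,z)` gives it over `(x,y,z)`. -/
lemma chord_chain1 (A B C D p q r : ℝ) (hp : 0 < p) (hq : 0 < q) (hr : 0 < r)
    (h1 : (C - B) * p ≤ (B - A) * q) (h2 : (D - C) * q ≤ (C - B) * r) :
    (D - C) * (p + q) ≤ (C - A) * r := by
  have H1 := mul_le_mul_of_nonneg_right h1 hr.le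
  have H2 := mul_le_mul_of_nonneg_right h2 (by linarith : (0:ℝ) ≤ p + q)
  nlinarith [H1, H2, hq]

/-- Chaining lemma: slope condition over `(x,y,w)` and `(y,w,z)` gives it over `(x,y,z)`. -/
lemma chord_chain2 (A B C D p q r : ℝ) (hp : 0 < p) (hq : 0 < q) (hr : 0 < r)
    (h1 : (C - B) * p ≤ (B - A) * q) (h2 : (D - C) * q ≤ (C - B) * r) :
    (D - B) * p ≤ (B - A) * (q + r) := by
  have H1 := mul_le_mul_of_nonneg_right h1 hr.le
  have H2 := mul_le_mul_of_nonneg_right h2 hp.le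
  nlinarith [H1, H2, hq]

/-- If every point of `[a, b]` has an open neighborhood on which `f` is concave
(relative to `[a, b]`), then `f` is concave on `[a, b]`. -/
theorem concaveOn_of_locally_concaveOn
    (a b : ℝ) (hab : a < b) (f : ℝ → ℝ)
    (hloc : ∀ t ∈ Set.Icc a b, ∃ U : Set ℝ, IsOpen U ∧ t ∈ U ∧
      ∀ x ∈ U ∩ Set.Icc a b, ∀ y ∈ U ∩ Set.Icc a b, ∀ l ∈ Set.Icc (0:ℝ) 1,
        l * f x + (1 - l) * f y ≤ f (l * x + (1 - l) * y)) :
    ∀ x ∈ Set.Icc a b, ∀ y ∈ Set.Icc a b, ∀ l ∈ Set.Icc (0:ℝ) 1,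
      l * f x + (1 - l) * f y ≤ f (l * x + (1 - l) * y) := by
  classical
  choose U hUopen hUmem hUconc using hloc
  -- Lebesgue number for the cover
  obtain ⟨δ, hδ, hball⟩ :=
    lebesgue_number_lemma_of_metric (isCompact_Icc (a := a) (b := b))
      (c := fun t : Set.Icc a b => U t.1 t.2) (fun i => hUopen i.1 i.2)
      (fun t ht => Set.mem_iUnion.2 ⟨⟨t, ht⟩, hUmem t ht⟩)
  set P : ℝ → ℝ → ℝ → Prop :=
    fun u v w => (f w - f v) * (v - u) ≤ (f v - f u) * (w - v) with hP
  -- the chord property on small windows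
  have window : ∀ u v w : ℝ, u ∈ Set.Icc a b → v ∈ Set.Icc a b → w ∈ Set.Icc a b →
      u < v → v < w → w - u < δ → P u v w := by
    intro u v w hu hv hw huv hvw hspan
    obtain ⟨i, hi⟩ := hball u hu
    have hvU : v ∈ U i.1 i.2 := hi (by
      simp only [Metric.mem_ball, Real.dist_eq]
      rw [abs_of_pos (by linarith)]; linarith)
    have hwU : w ∈ U i.1 i.2 := hi (by
      simp only [Metric.mem_ball, Real.dist_eq]
      rw [abs_of_pos (by linarith)]; linarith)
    have huU : u ∈ U i.1 i.2 := hi (Metric.mem_ball_self hδ)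
    have h0 : (0 : ℝ) < w - u := by linarith
    have hl0 : (0 : ℝ) ≤ (v - u) / (w - u) := div_nonneg (by linarith) h0.le
    have hl1 : (v - u) / (w - u) ≤ 1 := by
      rw [div_le_one h0]; linarith
    have key := hUconc i.1 i.2 w ⟨hwU, hw⟩ u ⟨huU, hu⟩ ((v - u) / (w - u)) ⟨hl0, hl1⟩
    have e2 : (v - u) / (w - u) * w + (1 - (v - u) / (w - u)) * u = v := by
      field_simp; ring
    rw [e2] at key
    have e1 : (v - u) / (w - u) * f w + (1 - (v - u) / (w - u)) * f u
        = ((v - u) * f w + (w - v) * f u) / (w - u) := by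
      field_simp; ring
    rw [e1] at key
    have h3 : (v - u) * f w + (w - v) * f u ≤ f v * (w - u) := (div_le_iff₀ h0).mp key
    simp only [hP]; nlinarith [h3]
  have hδ3 : (0 : ℝ) < δ / 3 := by linarith
  -- step 1: left span arbitrary, right span ≤ δ/3
  have D : ∀ n : ℕ, ∀ u v w : ℝ, u ∈ Set.Icc a b → v ∈ Set.Icc a b → w ∈ Set.Icc a b →
      u < v → v < w → w - v ≤ δ / 3 → v - u ≤ n * (δ / 3) → P u v w := by
    intro n
    induction n with
    | zero => intro u v w _ _ _ huv _ _ h2; simp at h2; linarith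
    | succ n ih =>
      intro u v w hu hv hw huv hvw h1 h2
      by_cases hc : v - u ≤ δ / 3
      · exact window u v w hu hv hw huv hvw (by linarith)
      · push_neg at hc
        have hn : 1 ≤ n := by
          rcases Nat.eq_zero_or_pos n with h | h
          · subst h; push_cast at h2; linarith
          · exact h
        have hn' : (1 : ℝ) ≤ n := by exact_mod_cast hn
        set m := v - δ / 3 with hm
        have hum : u < m := by simp only [hm]; linarith
        have hmv : m < v := by simp only [hm]; linarith
        have hmI : m ∈ Set.Icc a b := ⟨by linarith [hu.1], by linarith [hv.2]⟩
        have p1 : P u m v := by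
          apply ih u m v hu hmI hv hum hmv
          · simp only [hm]; linarith
          · push_cast at h2 ⊢; simp only [hm]; linarith
        have p2 : P m v w := by
          apply ih m v w hmI hv hw hmv hvw h1
          have : δ / 3 ≤ n * (δ / 3) := by nlinarith
          simp only [hm]; linarith
        have := chord_chain1 (f u) (f m) (f v) (f w) (m - u) (v - m) (w - v)
          (by linarith) (by linarith) (by linarith) p1 p2
        simp only [hP]
        have e : m - u + (v - m) = v - u := by ring
        rw [e] at this; exact this
  have E : ∀ u v w : ℝ, u ∈ Set.Icc a b → v ∈ Set.Icc a b → w ∈ Set.Icc a b →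
      u < v → v < w → w - v ≤ δ / 3 → P u v w := by
    intro u v w hu hv hw huv hvw h1
    obtain ⟨n, hn⟩ := exists_nat_ge ((v - u) / (δ / 3))
    have : v - u ≤ n * (δ / 3) := by
      rw [div_le_iff₀ hδ3] at hn; linarith
    exact D n u v w hu hv hw huv hvw h1 this
  -- step 2: both spans arbitrary
  have F : ∀ n : ℕ, ∀ u v w : ℝ, u ∈ Set.Icc a b → v ∈ Set.Icc a b → w ∈ Set.Icc a b →
      u < v → v < w → w - v ≤ n * (δ / 3) → P u v w := by
    intro n
    induction n with
    | zero => intro u v w _ _ _ _ hvw h2; simp at h2; linarith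
    | succ n ih =>
      intro u v w hu hv hw huv hvw h2
      by_cases hc : w - v ≤ δ / 3
      · exact E u v w hu hv hw huv hvw hc
      · push_neg at hc
        set m := v + δ / 3 with hm
        have hvm : v < m := by simp only [hm]; linarith
        have hmw : m < w := by simp only [hm]; linarith
        have hmI : m ∈ Set.Icc a b := ⟨by linarith [hv.1], by linarith [hw.2]⟩
        have p1 : P u v m := E u v m hu hv hmI huv hvm (by simp only [hm]; linarith)
        have p2 : P v m w := by
          apply ih v m w hv hmI hw hvm hmw
          push_cast at h2 ⊢; simp only [hm]; linarith
        have := chord_chain2 (f u) (f v) (f m) (f w) (v - u) (m - v) (w - m)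
          (by linarith) (by linarith) (by linarith) p1 p2
        simp only [hP]
        have e : m - v + (w - m) = w - v := by ring
        rw [e] at this; exact this
  have Pall : ∀ u v w : ℝ, u ∈ Set.Icc a b → v ∈ Set.Icc a b → w ∈ Set.Icc a b →
      u < v → v < w → P u v w := by
    intro u v w hu hv hw huv hvw
    obtain ⟨n, hn⟩ := exists_nat_ge ((w - v) / (δ / 3))
    have : w - v ≤ n * (δ / 3) := by
      rw [div_le_iff₀ hδ3] at hn; linarith
    exact F n u v w hu hv hw huv hvw this
  -- conclude
  intro x hx y hy l hl
  have hz : l * x + (1 - l) * y ∈ Set.Icc a b := by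
    constructor
    · nlinarith [hx.1, hy.1, hl.1, hl.2]
    · nlinarith [hx.2, hy.2, hl.1, hl.2]
  rcases eq_or_lt_of_le hl.1 with h0 | h0
  · rw [← h0]; norm_num
  rcases eq_or_lt_of_le hl.2 with h1 | h1
  · rw [h1]; norm_num
  rcases lt_trichotomy x y with hxy | hxy | hxy
  · set z := l * x + (1 - l) * y with hzdef
    have hxz : x < z := by simp only [hzdef]; nlinarith
    have hzy : z < y := by simp only [hzdef]; nlinarith
    have hp := Pall x z y hx hz hy hxz hzy
    simp only [hP] at hp
    have e1 : z - x = (1 - l) * (y - x) := by simp only [hzdef]; ring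
    have e2 : y - z = l * (y - x) := by simp only [hzdef]; ring
    rw [e1, e2, show (f y - f z) * ((1 - l) * (y - x)) = (f y - f z) * (1 - l) * (y - x) by ring,
      show (f z - f x) * (l * (y - x)) = (f z - f x) * l * (y - x) by ring] at hp
    have hp' := le_of_mul_le_mul_right hp (by linarith : (0:ℝ) < y - x)
    nlinarith [hp']
  · have e : l * x + (1 - l) * y = y := by rw [hxy]; ring
    rw [e, hxy]
    nlinarith
  · set z := l * x + (1 - l) * y with hzdef
    have hyz : y < z := by simp only [hzdef]; nlinarith
    have hzx : z < x := by simp only [hzdef]; nlinarith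
    have hp := Pall y z x hy hz hx hyz hzx
    simp only [hP] at hp
    have e1 : z - y = l * (x - y) := by simp only [hzdef]; ring
    have e2 : x - z = (1 - l) * (x - y) := by simp only [hzdef]; ring
    rw [e1, e2, show (f x - f z) * (l * (x - y)) = (f x - f z) * l * (x - y) by ring,
      show (f z - f y) * ((1 - l) * (x - y)) = (f z - f y) * (1 - l) * (x - y) by ring] at hp
    have hp' := le_of_mul_le_mul_right hp (by linarith : (0:ℝ) < x - y)
    nlinarith [hp']
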